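/- Let l ∈ C¹([0,M], (0,1/2)) and define the division kernel q(x,α) = 1_{{l(x) ≤ α ≤ 1−l(x)}}/(1 − 2 l(x)). Then for every x ∈ [0,M] and u ∈ (0,1), the generalized inverse of the cumulative distribution function F_x is F_x^{-1}(u) = (1 − 2u) l(x) + u. Moreover, if 0 ≤ x l'(x) + l(x) ≤ 1 for every x ∈ (0,M), then q satisfies Assumption (Q). -/

import Mathlib

open MeasureTheory Set Filter

/-- Cumulative distribution function `F_x(u) = ∫_0^u q(x,α) dα` associated to a
division kernel. -/
noncomputable def cdf (q : ℝ → ℝ → ℝ) (x u : ℝ) : ℝ := ∫ α in (0:ℝ)..u, q x α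

/-- Generalized inverse `F_x^{-1}(v) = inf {u ∈ [0,1] : F_x(u) ≥ v}`. -/
noncomputable def cdfInv (q : ℝ → ℝ → ℝ) (x v : ℝ) : ℝ :=
  sInf {u ∈ Set.Icc (0:ℝ) 1 | v ≤ cdf q x u}

/-- A division kernel on `[0,M]`: measurable, nonnegative, a probability density in the
second variable, symmetric with respect to `1/2`. -/
def IsDivisionKernel (M : ℝ) (q : ℝ → ℝ → ℝ) : Prop :=
  Measurable (Function.uncurry q) ∧
  (∀ x ∈ Set.Icc (0:ℝ) M, ∀ α ∈ Set.Icc (0:ℝ) 1, 0 ≤ q x α) ∧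
  (∀ x ∈ Set.Icc (0:ℝ) M, (∫ α in (0:ℝ)..1, q x α) = 1) ∧
  (∀ x ∈ Set.Icc (0:ℝ) M, ∀ α ∈ Set.Icc (0:ℝ) 1, q x α = q x (1 - α))

/-- Assumption (Q): for all `u ∈ (0,1)` and `0 ≤ x ≤ y ≤ M`,
`x·F_x^{-1}(u) ≤ y·F_y^{-1}(u)` and `x·(1 − F_x^{-1}(u)) ≤ y·(1 − F_y^{-1}(u))`. -/
def AssumptionQ (M : ℝ) (q : ℝ → ℝ → ℝ) : Prop :=
  ∀ u ∈ Set.Ioo (0:ℝ) 1, ∀ x y : ℝ, 0 ≤ x → x ≤ y → y ≤ M →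
    x * cdfInv q x u ≤ y * cdfInv q y u ∧
    x * (1 - cdfInv q x u) ≤ y * (1 - cdfInv q y u)

/-- For the uniform division kernel `q(x,α) = 1_{l(x) ≤ α ≤ 1−l(x)}/(1 − 2 l(x))` with
`l ∈ C¹([0,M],(0,1/2))`, the generalized inverse of the cdf is
`F_x^{-1}(u) = (1 − 2u) l(x) + u`; moreover if `0 ≤ x l'(x) + l(x) ≤ 1` on `(0,M)` then
`q` satisfies Assumption (Q). -/
theorem statement2 (M : ℝ) (hM : 0 < M) (l : ℝ → ℝ)
    (hl_diff : ContDiffOn ℝ 1 l (Set.Icc 0 M))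
    (hl_range : ∀ x ∈ Set.Icc (0:ℝ) M, l x ∈ Set.Ioo (0:ℝ) (1/2))
    (q : ℝ → ℝ → ℝ)
    (hq_def : ∀ x α : ℝ, q x α = if l x ≤ α ∧ α ≤ 1 - l x then (1 - 2 * l x)⁻¹ else 0) :
    (∀ x ∈ Set.Icc (0:ℝ) M, ∀ u ∈ Set.Ioo (0:ℝ) 1,
      cdfInv q x u = (1 - 2 * u) * l x + u) ∧
    ((∀ x ∈ Set.Ioo (0:ℝ) M, 0 ≤ x * deriv l x + l x ∧ x * deriv l x + l x ≤ 1) →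
      AssumptionQ M q) := by
  have hinv : ∀ x ∈ Set.Icc (0:ℝ) M, ∀ u ∈ Set.Ioo (0:ℝ) 1,
      cdfInv q x u = (1 - 2 * u) * l x + u := by
    intro x hx u hu
    obtain ⟨hu0, hu1⟩ := hu
    obtain ⟨hl0, hl2⟩ := hl_range x hx
    have hc0 : (0:ℝ) < 1 - 2 * l x := by linarith
    set c : ℝ := (1 - 2 * l x)⁻¹ with hc
    have hcpos : 0 < c := inv_pos.2 hc0
    have hqind : q x = (Set.Icc (l x) (1 - l x)).indicator (fun _ => c) := by
      funext α
      simp [hq_def, Set.indicator_apply, Set.mem_Icc, hc]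
    have hqnn : ∀ α, 0 ≤ q x α := by
      intro α; rw [hq_def]; split
      · exact hcpos.le
      · exact le_rfl
    have hInt : ∀ a b : ℝ, IntervalIntegrable (q x) volume a b := by
      intro a b
      rw [hqind, intervalIntegrable_iff]
      refine (integrable_indicator_iff measurableSet_Icc).2 ?_
      refine integrableOn_const ?_
      exact (lt_of_le_of_lt (Measure.restrict_apply_le _ _) measure_Icc_lt_top).ne
    have hmono : ∀ a b : ℝ, a ≤ b → cdf q x a ≤ cdf q x b := by
      intro a b hab
      have hadd := intervalIntegral.integral_add_adjacent_intervals (hInt 0 a) (hInt a b)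
      have h2 : 0 ≤ ∫ α in a..b, q x α :=
        intervalIntegral.integral_nonneg hab (fun α _ => hqnn α)
      simp only [cdf]; linarith
    have hval : ∀ u', l x ≤ u' → u' ≤ 1 - l x → cdf q x u' = (u' - l x) * c := by
      intro u' h1 h2
      have hne : ∀ᵐ α : ℝ, α ≠ l x := by
        have h0 : (volume : Measure ℝ) {l x} = 0 := Real.volume_singleton
        simpa [ae_iff] using h0
      have e1 : (∫ α in (0:ℝ)..(l x), q x α) = 0 := by
        have : (∫ α in (0:ℝ)..(l x), q x α) = ∫ α in (0:ℝ)..(l x), (0:ℝ) := by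
          refine intervalIntegral.integral_congr_ae ?_
          filter_upwards [hne] with α hα hmem
          rw [Set.uIoc_of_le hl0.le] at hmem
          rw [hq_def]
          exact if_neg (fun h => hα (le_antisymm hmem.2 h.1))
        simp at this ⊢; exact this
      have e2 : (∫ α in (l x)..u', q x α) = (u' - l x) * c := by
        have : (∫ α in (l x)..u', q x α) = ∫ α in (l x)..u', c := by
          refine intervalIntegral.integral_congr (fun α hα => ?_)
          rw [Set.uIcc_of_le h1] at hα
          rw [hq_def]
          exact if_pos ⟨hα.1, by linarith [hα.2]⟩
        rw [this, intervalIntegral.integral_const, smul_eq_mul]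
      have hadd := intervalIntegral.integral_add_adjacent_intervals (hInt 0 (l x)) (hInt (l x) u')
      simp only [cdf]
      rw [← hadd, e1, e2, zero_add]
    set u₀ : ℝ := (1 - 2 * u) * l x + u with hu₀def
    have hu₀l : l x < u₀ := by nlinarith [mul_pos hu0 hc0]
    have hu₀r : u₀ < 1 - l x := by nlinarith [mul_pos (show (0:ℝ) < 1 - u by linarith) hc0]
    have hcdfu₀ : cdf q x u₀ = u := by
      rw [hval u₀ hu₀l.le hu₀r.le, hc, hu₀def]
      field_simp
      ring
    have hmemS : u₀ ∈ {u' ∈ Set.Icc (0:ℝ) 1 | u ≤ cdf q x u'} :=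
      ⟨⟨by linarith, by linarith⟩, le_of_eq hcdfu₀.symm⟩
    have hlb : ∀ b ∈ {u' ∈ Set.Icc (0:ℝ) 1 | u ≤ cdf q x u'}, u₀ ≤ b := by
      rintro b ⟨⟨hb0, hb1⟩, hbc⟩
      by_contra hlt
      push_neg at hlt
      rcases le_or_gt b (l x) with hbl | hbl
      · have h1 : cdf q x b ≤ cdf q x (l x) := hmono _ _ hbl
        have h0 : cdf q x (l x) = 0 := by rw [hval (l x) le_rfl (by linarith)]; ring
        linarith
      · have hbv : cdf q x b = (b - l x) * c := hval b hbl.le (by linarith)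
        have hlt2 : cdf q x b < u := by
          rw [hbv, ← hcdfu₀, hval u₀ hu₀l.le hu₀r.le]
          exact mul_lt_mul_of_pos_right (by linarith) hcpos
        linarith
    unfold cdfInv
    exact le_antisymm (csInf_le ⟨0, fun y hy => hy.1.1⟩ hmemS) (le_csInf ⟨u₀, hmemS⟩ hlb)
  refine ⟨hinv, ?_⟩
  intro hd u hu x y hx0 hxy hyM
  obtain ⟨hu0, hu1⟩ := hu
  have hxM : x ∈ Set.Icc (0:ℝ) M := ⟨hx0, le_trans hxy hyM⟩
  have hyMm : y ∈ Set.Icc (0:ℝ) M := ⟨le_trans hx0 hxy, hyM⟩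
  rw [hinv x hxM u ⟨hu0, hu1⟩, hinv y hyMm u ⟨hu0, hu1⟩]
  have hderivat : ∀ t ∈ Set.Ioo (0:ℝ) M, DifferentiableAt ℝ l t := by
    intro t ht
    exact (hl_diff.differentiableOn one_ne_zero).differentiableAt
      (Icc_mem_nhds ht.1 ht.2)
  have hcont : ContinuousOn l (Set.Icc (0:ℝ) M) := hl_diff.continuousOn
  have hG : MonotoneOn (fun t => t * ((1 - 2 * u) * l t + u)) (Set.Icc (0:ℝ) M) := by
    refine monotoneOn_of_deriv_nonneg (convex_Icc 0 M) ?_ ?_ ?_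
    · exact continuousOn_id.mul ((continuousOn_const.mul hcont).add continuousOn_const)
    · rw [interior_Icc]
      intro t ht
      have hl' : HasDerivAt l (deriv l t) t := (hderivat t ht).hasDerivAt
      exact ((hasDerivAt_id t).mul
        ((hl'.const_mul (1 - 2 * u)).add_const u)).differentiableAt.differentiableWithinAt
    · rw [interior_Icc]
      intro t ht
      have hl' : HasDerivAt l (deriv l t) t := (hderivat t ht).hasDerivAt
      have hin : HasDerivAt (fun s => (1 - 2 * u) * l s + u) ((1 - 2 * u) * deriv l t) t :=
        ((hl'.const_mul (1 - 2 * u)).add_const u)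
      have hGt : HasDerivAt (fun s => s * ((1 - 2 * u) * l s + u))
          (1 * ((1 - 2 * u) * l t + u) + t * ((1 - 2 * u) * deriv l t)) t :=
        (hasDerivAt_id t).mul hin
      rw [hGt.deriv]
      obtain ⟨hs0, hs1⟩ := hd t ht
      nlinarith [mul_nonneg hs0 (show (0:ℝ) ≤ 1 - u by linarith),
        mul_nonneg hu0.le (show (0:ℝ) ≤ 1 - (t * deriv l t + l t) by linarith)]
  have hH : MonotoneOn (fun t => t * (1 - ((1 - 2 * u) * l t + u))) (Set.Icc (0:ℝ) M) := by
    refine monotoneOn_of_deriv_nonneg (convex_Icc 0 M) ?_ ?_ ?_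
    · exact continuousOn_id.mul (continuousOn_const.sub
        ((continuousOn_const.mul hcont).add continuousOn_const))
    · rw [interior_Icc]
      intro t ht
      have hl' : HasDerivAt l (deriv l t) t := (hderivat t ht).hasDerivAt
      exact ((hasDerivAt_id t).mul
        ((((hl'.const_mul (1 - 2 * u)).add_const u)).const_sub 1)).differentiableAt.differentiableWithinAt
    · rw [interior_Icc]
      intro t ht
      have hl' : HasDerivAt l (deriv l t) t := (hderivat t ht).hasDerivAt
      have hin : HasDerivAt (fun s => 1 - ((1 - 2 * u) * l s + u))
          (-((1 - 2 * u) * deriv l t)) t :=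
        (((hl'.const_mul (1 - 2 * u)).add_const u)).const_sub 1
      have hHt : HasDerivAt (fun s => s * (1 - ((1 - 2 * u) * l s + u)))
          (1 * (1 - ((1 - 2 * u) * l t + u)) + t * -((1 - 2 * u) * deriv l t)) t :=
        (hasDerivAt_id t).mul hin
      rw [hHt.deriv]
      obtain ⟨hs0, hs1⟩ := hd t ht
      nlinarith [mul_nonneg hs0 hu0.le,
        mul_nonneg (show (0:ℝ) ≤ 1 - u by linarith)
          (show (0:ℝ) ≤ 1 - (t * deriv l t + l t) by linarith)]
  exact ⟨hG hxM hyMm hxy, hH hxM hyMm hxy⟩
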